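/- Let φ: ℝ → ℝ be differentiable, let (f_ℓ)_{ℓ∈ℤ} be a 2N-periodic real sequence, let r ≥ 0 be an integer with ℓ_k − ℓ_{k−1} ≥ 2r+1 for all k, let C_k = {ℓ_k − r, …, ℓ_k + r}, and let (ν_k) be any real weights. For u_h ∈ X_h define F_ℓ(u_h) = φ'(u'_{h,ℓ}) − φ'(u'_{h,ℓ+1}) − ε f_ℓ and F_{j,h}(u_h) = Σ_{k=−K+1}^K ν_k Σ_{ℓ∈C_k} F_ℓ(u_h) ζ_j(εℓ). Then for every j, F_{j,h}(u_h) = ν_j (φ'(U'_j) − φ'(U'_{j+1})) − f̃_j, where f̃_j = Σ_{k=−K+1}^K ν_k Σ_{ℓ∈C_k} ε f_ℓ ζ_j(εℓ) is the cluster summation rule applied to the external forces alone. -/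

import Mathlib

/-- `v : ℤ → ℝ` belongs to the coarse space `X_h`. -/
def IsCoarse (N : ℤ) (ε : ℝ) (L : ℤ → ℤ) (v : ℤ → ℝ) : Prop :=
  (∀ l : ℤ, v (l + 2 * N) = v l) ∧ v 0 = 0 ∧
    ∀ k l : ℤ, L (k - 1) ≤ l → l ≤ L k →
      v l = v (L (k - 1)) +
        ε * ((l - L (k - 1) : ℤ) : ℝ) *
          ((v (L k) - v (L (k - 1))) / (ε * ((L k - L (k - 1) : ℤ) : ℝ)))

/-- with external forces, the force-based cluster summation rule
gives `F_{j,h}(u_h) = ν_j (φ'(U'_j) - φ'(U'_{j+1})) - f̃_j`, where `f̃_j` is the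
cluster summation rule applied to the external forces alone. -/
theorem statement2
    (N K : ℤ) (hN : 1 ≤ N) (hK : 1 ≤ K)
    (ε : ℝ) (hε : ε = (N : ℝ)⁻¹)
    (L : ℤ → ℤ) (hmono : StrictMono L) (hL0 : L 0 = 0)
    (hLper : ∀ k : ℤ, L (k + 2 * K) = L k + 2 * N)
    (hsz : ℤ → ℝ) (hhsz : ∀ k : ℤ, hsz k = ε * ((L k - L (k - 1) : ℤ) : ℝ))
    (r : ℤ) (hr : 0 ≤ r) (hnov : ∀ k : ℤ, 2 * r + 1 ≤ L k - L (k - 1))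
    (ζ : ℤ → ℤ → ℝ)
    (hζ1 : ∀ j l : ℤ, L (j - 1) ≤ l → l ≤ L j →
      ζ j l = ((l - L (j - 1) : ℤ) : ℝ) / ((L j - L (j - 1) : ℤ) : ℝ))
    (hζ2 : ∀ j l : ℤ, L j ≤ l → l ≤ L (j + 1) →
      ζ j l = ((L (j + 1) - l : ℤ) : ℝ) / ((L (j + 1) - L j : ℤ) : ℝ))
    (hζ3 : ∀ j l : ℤ, L (j + 1) < l → l < L (j - 1) + 2 * N → ζ j l = 0)
    (hζ4 : ∀ j l : ℤ, ζ j (l + 2 * N) = ζ j l)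
    (ν : ℤ → ℝ)
    (φ : ℝ → ℝ) (hφ : Differentiable ℝ φ)
    (f : ℤ → ℝ) (hfper : ∀ l : ℤ, f (l + 2 * N) = f l)
    (u : ℤ → ℝ) (hu : IsCoarse N ε L u)
    (Up : ℤ → ℝ) (hUp : ∀ k : ℤ, Up k = (u (L k) - u (L (k - 1))) / hsz k)
    (F : ℤ → ℝ)
    (hF : ∀ l : ℤ, F l = deriv φ (ε⁻¹ * (u l - u (l - 1))) -
      deriv φ (ε⁻¹ * (u (l + 1) - u l)) - ε * f l)
    (Fh : ℤ → ℝ)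
    (hFh : ∀ j : ℤ, Fh j = ∑ k ∈ Finset.Icc (-K + 1) K,
      ν k * ∑ l ∈ Finset.Icc (L k - r) (L k + r), F l * ζ j l)
    (ftil : ℤ → ℝ)
    (hftil : ∀ j : ℤ, ftil j = ∑ k ∈ Finset.Icc (-K + 1) K,
      ν k * ∑ l ∈ Finset.Icc (L k - r) (L k + r), ε * f l * ζ j l) :
    ∀ j ∈ Finset.Icc (-K + 1) K,
      Fh j = ν j * (deriv φ (Up j) - deriv φ (Up (j + 1))) - ftil j := by
  intro j hj
  have hNpos : (0:ℝ) < (N:ℝ) := by exact_mod_cast lt_of_lt_of_le one_pos hN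
  have hεne : ε ≠ 0 := by rw [hε]; exact inv_ne_zero (ne_of_gt hNpos)
  obtain ⟨hper, hu0, haff⟩ := hu
  -- the discrete gradient is constant on each element
  have grad : ∀ k l : ℤ, L (k - 1) < l → l ≤ L k →
      ε⁻¹ * (u l - u (l - 1)) = Up k := by
    intro k l h1 h2
    have e1 := haff k l (le_of_lt h1) h2
    have e2 := haff k (l - 1) (by omega) (by omega)
    have hdpos : (0:ℤ) < L k - L (k - 1) := by have := hnov k; omega
    have hd : ((L k - L (k - 1) : ℤ) : ℝ) ≠ 0 := by
      exact_mod_cast hdpos.ne'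
    have hc : ((l - L (k - 1) : ℤ) : ℝ) = ((l - 1 - L (k - 1) : ℤ) : ℝ) + 1 := by
      push_cast; ring
    rw [hUp k, hhsz k, e1, e2, hc]
    field_simp
    ring
  -- values of the basis function at the nodes
  have zjj : ζ j (L j) = 1 := by
    rw [hζ1 j (L j) (le_of_lt (hmono (by omega))) le_rfl]
    have hdpos : (0:ℤ) < L j - L (j - 1) := by have := hnov j; omega
    have hd : ((L j - L (j - 1) : ℤ) : ℝ) ≠ 0 := by exact_mod_cast hdpos.ne'
    exact div_self hd
  have zjk : ∀ k : ℤ, -K + 1 ≤ k → k ≤ K → k ≠ j → ζ j (L k) = 0 := by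
    intro k hk1 hk2 hkj
    obtain ⟨hj1, hj2⟩ := Finset.mem_Icc.mp hj
    rcases lt_or_gt_of_ne hkj with h | h
    · rcases eq_or_lt_of_le (by omega : k ≤ j - 1) with he | hlt
      · rw [he, hζ1 j (L (j - 1)) le_rfl (le_of_lt (hmono (by omega)))]
        simp
      · have hz := hζ4 j (L k)
        have hLk : L (k + 2 * K) = L k + 2 * N := hLper k
        rcases eq_or_lt_of_le (by omega : j + 1 - 2 * K ≤ k) with he | hlt2
        · have hke : k + 2 * K = j + 1 := by omega
          rw [← hz, show L k + 2 * N = L (j + 1) by rw [← hke, hLk],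
            hζ2 j (L (j + 1)) (le_of_lt (hmono (by omega))) le_rfl]
          simp
        · rw [← hz, show L k + 2 * N = L (k + 2 * K) from hLk.symm]
          apply hζ3
          · exact hmono (by omega)
          · have h3 : L (k + 2 * K) < L (j - 1 + 2 * K) := hmono (by omega)
            rw [hLper (j - 1)] at h3
            exact h3
    · rcases eq_or_lt_of_le (by omega : j + 1 ≤ k) with he | hlt
      · rw [← he, hζ2 j (L (j + 1)) (le_of_lt (hmono (by omega))) le_rfl]
        simp
      · rcases eq_or_lt_of_le (by omega : k ≤ j - 1 + 2 * K) with he | hlt2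
        · rw [he, hLper (j - 1), hζ4,
            hζ1 j (L (j - 1)) le_rfl (le_of_lt (hmono (by omega)))]
          simp
        · apply hζ3
          · exact hmono (by omega)
          · rw [← hLper (j - 1)]
            exact hmono (by omega)
  -- away from the node, the gradient part of F vanishes
  have hgrad0 : ∀ k l : ℤ, L k - r ≤ l → l ≤ L k + r → l ≠ L k →
      deriv φ (ε⁻¹ * (u l - u (l - 1))) = deriv φ (ε⁻¹ * (u (l + 1) - u l)) := by
    intro k l h1 h2 hne
    rcases lt_or_gt_of_ne hne with h | h
    · have hn := hnov k
      have g1 := grad k l (by omega) (by omega)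
      have g2 := grad k (l + 1) (by omega) (by omega)
      simp only [add_sub_cancel_right] at g2
      rw [g1, g2]
    · have ek : k + 1 - 1 = k := by ring
      have hn := hnov (k + 1)
      rw [ek] at hn
      have g1 := grad (k + 1) l (by rw [ek]; omega) (by omega)
      have g2 := grad (k + 1) (l + 1) (by rw [ek]; omega) (by omega)
      simp only [add_sub_cancel_right] at g2
      rw [g1, g2]
  -- the cluster sum
  have cluster : ∀ k : ℤ,
      ∑ l ∈ Finset.Icc (L k - r) (L k + r), F l * ζ j l
        = (deriv φ (Up k) - deriv φ (Up (k + 1))) * ζ j (L k)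
          - ∑ l ∈ Finset.Icc (L k - r) (L k + r), ε * f l * ζ j l := by
    intro k
    have hsplit : ∀ l : ℤ, F l * ζ j l =
        (deriv φ (ε⁻¹ * (u l - u (l - 1))) - deriv φ (ε⁻¹ * (u (l + 1) - u l))) * ζ j l
          - ε * f l * ζ j l := by
      intro l; rw [hF l]; ring
    calc ∑ l ∈ Finset.Icc (L k - r) (L k + r), F l * ζ j l
        = ∑ l ∈ Finset.Icc (L k - r) (L k + r),
            ((deriv φ (ε⁻¹ * (u l - u (l - 1))) - deriv φ (ε⁻¹ * (u (l + 1) - u l)))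
              * ζ j l - ε * f l * ζ j l) :=
          Finset.sum_congr rfl (fun l _ => hsplit l)
      _ = (∑ l ∈ Finset.Icc (L k - r) (L k + r),
            (deriv φ (ε⁻¹ * (u l - u (l - 1))) - deriv φ (ε⁻¹ * (u (l + 1) - u l)))
              * ζ j l)
          - ∑ l ∈ Finset.Icc (L k - r) (L k + r), ε * f l * ζ j l :=
          Finset.sum_sub_distrib _ _
      _ = (deriv φ (Up k) - deriv φ (Up (k + 1))) * ζ j (L k)
          - ∑ l ∈ Finset.Icc (L k - r) (L k + r), ε * f l * ζ j l := by
          congr 1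
          have e1 : ε⁻¹ * (u (L k) - u (L k - 1)) = Up k :=
            grad k (L k) (hmono (by omega)) le_rfl
          have e2 : ε⁻¹ * (u (L k + 1) - u (L k)) = Up (k + 1) := by
            have ek : k + 1 - 1 = k := by ring
            have hn := hnov (k + 1)
            rw [ek] at hn
            have g := grad (k + 1) (L k + 1) (by rw [ek]; omega) (by omega)
            simp only [add_sub_cancel_right] at g
            exact g
          rw [← e1, ← e2]
          apply Finset.sum_eq_single_of_mem (L k)
          · exact Finset.mem_Icc.mpr ⟨by omega, by omega⟩
          · intro l hl hne
            obtain ⟨h1l, h2l⟩ := Finset.mem_Icc.mp hl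
            rw [hgrad0 k l h1l h2l hne, sub_self, zero_mul]
  -- put everything together
  calc Fh j
      = ∑ k ∈ Finset.Icc (-K + 1) K,
          (ν k * ((deriv φ (Up k) - deriv φ (Up (k + 1))) * ζ j (L k))
            - ν k * ∑ l ∈ Finset.Icc (L k - r) (L k + r), ε * f l * ζ j l) := by
        rw [hFh j]
        refine Finset.sum_congr rfl fun k _ => ?_
        rw [cluster k]; ring
    _ = (∑ k ∈ Finset.Icc (-K + 1) K,
          ν k * ((deriv φ (Up k) - deriv φ (Up (k + 1))) * ζ j (L k))) - ftil j := by
        rw [Finset.sum_sub_distrib, hftil j]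
    _ = ν j * (deriv φ (Up j) - deriv φ (Up (j + 1))) - ftil j := by
        congr 1
        have hs := Finset.sum_eq_single_of_mem
          (f := fun k => ν k * ((deriv φ (Up k) - deriv φ (Up (k + 1))) * ζ j (L k)))
          j hj
          (fun k hk hkj => by
            obtain ⟨h1, h2⟩ := Finset.mem_Icc.mp hk
            simp only [zjk k h1 h2 hkj, mul_zero])
        rw [hs]
        simp only [zjj, mul_one]
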